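/- arXiv:2503.11634 — 3 statements merged into one kernel-verified Lean document; each statement's English description precedes it below -/
import Mathlib

section
/- Let D be a 'balanced' distribution over unit vectors (invariant under multiplication by a uniformly random phase e^{iθ}). For any t₁, t₂ ∈ ℕ, the mixed state E_{φ←D}[|φ−⟩⟨φ−|^{⊗t₁} ⊗ |φ⟩⟨φ|^{⊗t₂}] equals E_{φ←D, c←Binomial(t₁,1/2)}[|Rep(t₁,c,φ)⟩⟨Rep(t₁,c,φ)| ⊗ |φ⟩⟨φ|^{⊗t₂}], where |φ−⟩ = (|0⟩−|φ⟩)/√2 and |Rep(t,c,φ)⟩ is the normalized uniform superposition over |Set(S,φ)⟩ with |S|=c. -/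
open Finset MeasureTheory

noncomputable section

/-- Sesquilinear inner product on `α → ℂ`. -/
def dotC {α : Type} [Fintype α] (u v : α → ℂ) : ℂ :=
  ∑ i, (starRingEnd ℂ) (u i) * v i

/-- Tensor product of the site vectors `v i`. -/
def tprodF {ι : Type} [Fintype ι] {d : ℕ} (v : ι → Fin d → ℂ) :
    (ι → Fin d) → ℂ :=
  fun f => ∏ i, v i (f i)

/-- Outer product `|u⟩⟨v|` realized as a kernel. -/
def outerF {α : Type} (u v : α → ℂ) : α × α → ℂ :=
  fun p => u p.1 * (starRingEnd ℂ) (v p.2)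

/-- `|φ-⟩^{⊗t₁} ⊗ |φ⟩^{⊗t₂}`, with the first `t₁` registers holding
`(|0⟩ - |φ⟩)/√2` and the remaining `t₂` registers holding `|φ⟩`. -/
def bigVec (t₁ t₂ d : ℕ) (e0 φ : Fin d → ℂ) :
    (Fin (t₁ + t₂) → Fin d) → ℂ :=
  tprodF (fun i => if (i : ℕ) < t₁ then ((Real.sqrt 2 : ℂ))⁻¹ • (e0 - φ) else φ)

/-- `|Rep(t₁,c,φ)⟩ ⊗ |φ⟩^{⊗t₂}`: the normalized uniform superposition over
`|Set(S,φ)⟩` with `S` of size `c` inside the first `t₁` registers, tensored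
with `t₂` copies of `|φ⟩`. -/
def repVecFull (t₁ t₂ d : ℕ) (e0 φ : Fin d → ℂ) (c : ℕ) :
    (Fin (t₁ + t₂) → Fin d) → ℂ :=
  ((Real.sqrt (t₁.choose c) : ℂ))⁻¹ •
    ∑ S ∈ powersetCard c ((univ : Finset (Fin (t₁ + t₂))).filter
        fun i : Fin (t₁ + t₂) => (i : ℕ) < t₁),
      tprodF (fun i : Fin (t₁ + t₂) => if (i : ℕ) < t₁ then (if i ∈ S then -φ else e0) else φ)

/-- A distribution over unit vectors is *balanced* if it is invariant under
multiplication by a uniformly random phase `e^{iθ}`, `θ ← [0,2π]`. -/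
def BalancedDist {d : ℕ} (μ : Measure (Fin d → ℂ)) : Prop :=
  Measure.map (fun p : ℝ × (Fin d → ℂ) => Complex.exp ((p.1 : ℂ) * Complex.I) • p.2)
      ((ENNReal.ofReal (2 * Real.pi)⁻¹ •
          volume.restrict (Set.Ioc (0 : ℝ) (2 * Real.pi))).prod μ)
    = μ

def setVec (t₁ t₂ d : ℕ) (e0 φ : Fin d → ℂ) (S : Finset (Fin (t₁ + t₂))) :
    (Fin (t₁ + t₂) → Fin d) → ℂ :=
  tprodF (fun i : Fin (t₁ + t₂) => if (i : ℕ) < t₁ then (if i ∈ S then -φ else e0) else φ)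

abbrev TT (t₁ t₂ : ℕ) : Finset (Fin (t₁ + t₂)) :=
  (univ : Finset (Fin (t₁ + t₂))).filter fun i : Fin (t₁ + t₂) => (i : ℕ) < t₁

abbrev nTT (t₁ t₂ : ℕ) : Finset (Fin (t₁ + t₂)) :=
  (univ : Finset (Fin (t₁ + t₂))).filter fun i : Fin (t₁ + t₂) => ¬ (i : ℕ) < t₁

lemma card_TT (t₁ t₂ : ℕ) : (TT t₁ t₂).card = t₁ := by
  apply Finset.card_eq_of_bijective (fun i h => (⟨i, by omega⟩ : Fin (t₁ + t₂)))
  · intro a ha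
    simp only [TT, mem_filter, mem_univ, true_and] at ha
    exact ⟨a, ha, by simp⟩
  · intro i h; simp [TT, h]
  · intro i j hi hj hij
    simpa [Fin.ext_iff] using hij

lemma card_nTT (t₁ t₂ : ℕ) : (nTT t₁ t₂).card = t₂ := by
  apply Finset.card_eq_of_bijective (fun i h => (⟨t₁ + i, by omega⟩ : Fin (t₁ + t₂)))
  · intro a ha
    simp only [nTT, mem_filter, mem_univ, true_and, not_lt] at ha
    exact ⟨(a : ℕ) - t₁, by omega, by simp [Fin.ext_iff]; omega⟩
  · intro i h; simp [nTT]
  · intro i j hi hj hij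
    simpa [Fin.ext_iff] using hij

lemma setVec_apply (t₁ t₂ d : ℕ) (e0 φ : Fin d → ℂ) (S : Finset (Fin (t₁ + t₂)))
    (f : Fin (t₁ + t₂) → Fin d) :
    setVec t₁ t₂ d e0 φ S f
      = ∏ i : Fin (t₁ + t₂),
          (if (i : ℕ) < t₁ then (if i ∈ S then -(φ (f i)) else e0 (f i)) else φ (f i)) := by
  simp only [setVec, tprodF]
  refine Finset.prod_congr rfl fun i _ => ?_
  by_cases h1 : (i : ℕ) < t₁ <;> by_cases h2 : i ∈ S <;> simp [h1, h2]

lemma setVec_split (t₁ t₂ d : ℕ) (e0 φ : Fin d → ℂ) {S : Finset (Fin (t₁ + t₂))}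
    (hS : S ⊆ TT t₁ t₂) (f : Fin (t₁ + t₂) → Fin d) :
    setVec t₁ t₂ d e0 φ S f
      = ((∏ i ∈ S, -φ (f i)) * ∏ i ∈ TT t₁ t₂ \ S, e0 (f i)) *
          ∏ i ∈ nTT t₁ t₂, φ (f i) := by
  rw [setVec_apply,
    ← Finset.prod_filter_mul_prod_filter_not univ (fun i : Fin (t₁ + t₂) => (i : ℕ) < t₁)]
  congr 1
  · rw [← Finset.prod_sdiff hS, mul_comm]
    congr 1
    · refine Finset.prod_congr rfl fun i hi => ?_
      have h1 : (i : ℕ) < t₁ := by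
        have := hS hi; simpa [TT] using this
      simp [h1, hi]
    · refine Finset.prod_congr rfl fun i hi => ?_
      rw [Finset.mem_sdiff] at hi
      have h1 : (i : ℕ) < t₁ := by simpa [TT] using hi.1
      simp [h1, hi.2]
  · refine Finset.prod_congr rfl fun i hi => ?_
    have h1 : ¬ (i : ℕ) < t₁ := by simpa using hi
    simp [h1]

lemma bigVec_eq (t₁ t₂ d : ℕ) (e0 φ : Fin d → ℂ) :
    bigVec t₁ t₂ d e0 φ
      = (((Real.sqrt 2 : ℂ))⁻¹ ^ t₁) • ∑ S ∈ (TT t₁ t₂).powerset, setVec t₁ t₂ d e0 φ S := by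
  funext f
  simp only [Pi.smul_apply, Finset.sum_apply, smul_eq_mul]
  have hL : bigVec t₁ t₂ d e0 φ f
      = (((Real.sqrt 2 : ℂ))⁻¹ ^ t₁ *
          ∑ S ∈ (TT t₁ t₂).powerset, (∏ i ∈ S, -φ (f i)) * ∏ i ∈ TT t₁ t₂ \ S, e0 (f i)) *
        ∏ i ∈ nTT t₁ t₂, φ (f i) := by
    simp only [bigVec, tprodF]
    rw [← Finset.prod_filter_mul_prod_filter_not univ (fun i : Fin (t₁ + t₂) => (i : ℕ) < t₁)]
    congr 1
    · have : ∀ i ∈ TT t₁ t₂,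
          (if (i : ℕ) < t₁ then ((Real.sqrt 2 : ℂ))⁻¹ • (e0 - φ) else φ) (f i)
            = ((Real.sqrt 2 : ℂ))⁻¹ * (-φ (f i) + e0 (f i)) := by
        intro i hi
        have h1 : (i : ℕ) < t₁ := by simpa [TT] using hi
        simp only [h1, if_true, Pi.smul_apply, Pi.sub_apply, smul_eq_mul]
        ring
      rw [Finset.prod_congr rfl this, Finset.prod_mul_distrib, Finset.prod_const, card_TT,
        Finset.prod_add]
    · refine Finset.prod_congr rfl fun i hi => ?_
      have h1 : ¬ (i : ℕ) < t₁ := by simpa using hi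
      simp [h1]
  rw [hL, mul_assoc, Finset.sum_mul]
  congr 1
  refine Finset.sum_congr rfl fun S hS => ?_
  rw [Finset.mem_powerset] at hS
  rw [setVec_split t₁ t₂ d e0 φ hS f]


lemma outerF_smul_smul {α : Type} (a b : ℂ) (u v : α → ℂ) :
    outerF (a • u) (b • v) = (a * (starRingEnd ℂ) b) • outerF u v := by
  funext p
  simp only [outerF, Pi.smul_apply, smul_eq_mul, map_mul]
  ring

lemma outerF_sum_sum {α ι κ : Type} (A : Finset ι) (B : Finset κ)
    (u : ι → α → ℂ) (v : κ → α → ℂ) :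
    outerF (∑ S ∈ A, u S) (∑ S' ∈ B, v S')
      = ∑ S ∈ A, ∑ S' ∈ B, outerF (u S) (v S') := by
  funext p
  simp only [outerF, Finset.sum_apply, map_sum, Finset.sum_mul, Finset.mul_sum]
  exact Finset.sum_comm

lemma setVec_smul (t₁ t₂ d : ℕ) (e0 φ : Fin d → ℂ) (z : ℂ)
    {S : Finset (Fin (t₁ + t₂))} (hS : S ⊆ TT t₁ t₂) :
    setVec t₁ t₂ d e0 (z • φ) S = (z ^ (S.card + t₂)) • setVec t₁ t₂ d e0 φ S := by
  funext f
  simp only [Pi.smul_apply, smul_eq_mul]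
  rw [setVec_apply, setVec_apply]
  have key : ∀ i : Fin (t₁ + t₂),
      (if (i : ℕ) < t₁ then (if i ∈ S then -((z • φ) (f i)) else e0 (f i)) else (z • φ) (f i))
        = (if i ∈ S ∨ ¬ (i : ℕ) < t₁ then z else 1) *
          (if (i : ℕ) < t₁ then (if i ∈ S then -(φ (f i)) else e0 (f i)) else φ (f i)) := by
    intro i
    by_cases h1 : (i : ℕ) < t₁ <;> by_cases h2 : i ∈ S <;>
      simp [h1, h2, Pi.smul_apply, smul_eq_mul] <;> ring
  rw [Finset.prod_congr rfl fun i _ => key i, Finset.prod_mul_distrib]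
  congr 1
  rw [Finset.prod_ite (fun _ => z) (fun _ => (1 : ℂ)), Finset.prod_const, Finset.prod_const,
    one_pow, mul_one]
  congr 1
  have hset : (univ : Finset (Fin (t₁ + t₂))).filter
      (fun i : Fin (t₁ + t₂) => i ∈ S ∨ ¬ (i : ℕ) < t₁) = S ∪ nTT t₁ t₂ := by
    ext i
    simp [nTT, Finset.mem_union, Finset.mem_filter]
  rw [hset, Finset.card_union_of_disjoint, card_nTT]
  rw [Finset.disjoint_left]
  intro i hi
  have h1 : (i : ℕ) < t₁ := by have := hS hi; simpa [TT] using this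
  simp [nTT, h1]

lemma continuous_setVec_outer (t₁ t₂ d : ℕ) (e0 : Fin d → ℂ)
    (S S' : Finset (Fin (t₁ + t₂))) :
    Continuous (fun φ : Fin d → ℂ =>
      outerF (setVec t₁ t₂ d e0 φ S) (setVec t₁ t₂ d e0 φ S')) := by
  have hc : ∀ (Q : Finset (Fin (t₁ + t₂))) (f : Fin (t₁ + t₂) → Fin d),
      Continuous (fun φ : Fin d → ℂ => setVec t₁ t₂ d e0 φ Q f) := by
    intro Q f
    simp only [setVec_apply]
    apply continuous_finset_prod
    intro i _
    by_cases h1 : (i : ℕ) < t₁ <;> by_cases h2 : i ∈ Q <;> simp only [h1, h2, if_true, if_false]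
    · exact (continuous_apply (f i)).neg
    · exact continuous_const
    · exact continuous_apply (f i)
    · exact continuous_apply (f i)
  apply continuous_pi
  intro p
  simp only [outerF, starRingEnd_apply]
  exact ((hc S p.1).mul ((hc S' p.2).star))

lemma abs_setVec_le (t₁ t₂ d : ℕ) (e0 φ : Fin d → ℂ) (hφ : ∀ j, ‖φ j‖ ≤ 1)
    (S : Finset (Fin (t₁ + t₂))) (f : Fin (t₁ + t₂) → Fin d) :
    ‖setVec t₁ t₂ d e0 φ S f‖
      ≤ (1 + ∑ j, ‖e0 j‖) ^ (t₁ + t₂) := by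
  rw [setVec_apply, norm_prod]
  have hK : (0 : ℝ) ≤ 1 + ∑ j, ‖e0 j‖ := by
    positivity
  calc (∏ i : Fin (t₁ + t₂), ‖
        (if (i : ℕ) < t₁ then (if i ∈ S then -(φ (f i)) else e0 (f i)) else φ (f i))‖)
      ≤ ∏ _i : Fin (t₁ + t₂), (1 + ∑ j, ‖e0 j‖) := by
        apply Finset.prod_le_prod
        · intro i _; exact norm_nonneg _
        · intro i _
          by_cases h1 : (i : ℕ) < t₁ <;> by_cases h2 : i ∈ S <;>
            simp only [h1, h2, if_true, if_false, norm_neg]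
          · have := hφ (f i); linarith [Finset.sum_nonneg
              (fun j (_ : j ∈ (univ : Finset (Fin d))) => norm_nonneg (e0 j))]
          · have : ‖e0 (f i)‖ ≤ ∑ j, ‖e0 j‖ :=
              Finset.single_le_sum (f := fun j => ‖e0 j‖)
                (fun j _ => norm_nonneg _) (Finset.mem_univ (f i))
            linarith
          · have := hφ (f i); linarith [Finset.sum_nonneg
              (fun j (_ : j ∈ (univ : Finset (Fin d))) => norm_nonneg (e0 j))]
          · have := hφ (f i); linarith [Finset.sum_nonneg
              (fun j (_ : j ∈ (univ : Finset (Fin d))) => norm_nonneg (e0 j))]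
    _ = (1 + ∑ j, ‖e0 j‖) ^ (t₁ + t₂) := by
        rw [Finset.prod_const, Finset.card_univ, Fintype.card_fin]

lemma abs_le_one_of_unit {d : ℕ} (φ : Fin d → ℂ) (h : dotC φ φ = 1) :
    ∀ j, ‖φ j‖ ≤ 1 := by
  intro j
  have h1 : (∑ i, Complex.normSq (φ i) : ℝ) = 1 := by
    have : dotC φ φ = ((∑ i, Complex.normSq (φ i) : ℝ) : ℂ) := by
      simp only [dotC, Complex.ofReal_sum]
      exact Finset.sum_congr rfl fun i _ => (Complex.normSq_eq_conj_mul_self).symm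
    rw [this] at h
    exact_mod_cast h
  have h2 : Complex.normSq (φ j) ≤ 1 := by
    rw [← h1]
    exact Finset.single_le_sum (fun i _ => Complex.normSq_nonneg _) (Finset.mem_univ j)
  have h3 := Complex.sq_norm (φ j)
  nlinarith [norm_nonneg (φ j)]

lemma integrable_outer_setVec (t₁ t₂ d : ℕ) (e0 : Fin d → ℂ)
    (μ : Measure (Fin d → ℂ)) [IsProbabilityMeasure μ]
    (hsupp : ∀ᵐ φ ∂μ, dotC φ φ = 1 ∧ dotC e0 φ = 0)
    (S S' : Finset (Fin (t₁ + t₂))) :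
    Integrable (fun φ => outerF (setVec t₁ t₂ d e0 φ S) (setVec t₁ t₂ d e0 φ S')) μ := by
  set K : ℝ := (1 + ∑ j, ‖e0 j‖) ^ (t₁ + t₂) with hK
  have hK0 : 0 ≤ K := by positivity
  refine Integrable.mono' (integrable_const (K * K))
    (continuous_setVec_outer t₁ t₂ d e0 S S').aestronglyMeasurable ?_
  filter_upwards [hsupp] with φ hφ
  have habs := abs_le_one_of_unit φ hφ.1
  rw [pi_norm_le_iff_of_nonneg (by positivity)]
  intro p
  simp only [outerF, norm_mul, Complex.norm_conj]
  exact mul_le_mul (abs_setVec_le t₁ t₂ d e0 φ habs S p.1)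
    (abs_setVec_le t₁ t₂ d e0 φ habs S' p.2) (norm_nonneg _) hK0


lemma nuDist_prob :
    IsProbabilityMeasure ((ENNReal.ofReal (2 * Real.pi)⁻¹ •
      volume.restrict (Set.Ioc (0 : ℝ) (2 * Real.pi))) : Measure ℝ) := by
  constructor
  rw [Measure.smul_apply, Measure.restrict_apply MeasurableSet.univ, Set.univ_inter,
    Real.volume_Ioc, smul_eq_mul, ← ENNReal.ofReal_mul (by positivity)]
  rw [show (2 * Real.pi)⁻¹ * (2 * Real.pi - 0) = 1 by
    rw [sub_zero]; exact inv_mul_cancel₀ (by positivity)]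
  exact ENNReal.ofReal_one

lemma phase_integral_zero (m : ℤ) (hm : m ≠ 0) :
    ∫ θ : ℝ, (Complex.exp ((θ : ℂ) * Complex.I)) ^ m
      ∂((ENNReal.ofReal (2 * Real.pi)⁻¹ •
          volume.restrict (Set.Ioc (0 : ℝ) (2 * Real.pi))) : Measure ℝ) = 0 := by
  rw [integral_smul_measure]
  have h1 : ∀ θ : ℝ, (Complex.exp ((θ : ℂ) * Complex.I)) ^ m
      = Complex.exp (((m : ℂ) * Complex.I) * (θ : ℂ)) := by
    intro θ
    rw [← Complex.exp_int_mul]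
    congr 1
    ring
  simp only [h1]
  have h2 : ∫ θ : ℝ in Set.Ioc (0 : ℝ) (2 * Real.pi),
      Complex.exp (((m : ℂ) * Complex.I) * (θ : ℂ)) = 0 := by
    rw [← intervalIntegral.integral_of_le (by positivity : (0:ℝ) ≤ 2 * Real.pi)]
    rw [integral_exp_mul_complex (mul_ne_zero (Int.cast_ne_zero.mpr hm) Complex.I_ne_zero)]
    rw [show ((m : ℂ) * Complex.I) * ((2 * Real.pi : ℝ) : ℂ)
        = (m : ℂ) * (2 * (Real.pi : ℂ) * Complex.I) by push_cast; ring]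
    rw [Complex.exp_int_mul_two_pi_mul_I]
    simp
  rw [h2, smul_zero]

lemma cross_zero (t₁ t₂ d : ℕ) (e0 : Fin d → ℂ)
    (μ : Measure (Fin d → ℂ)) [IsProbabilityMeasure μ]
    (hsupp : ∀ᵐ φ ∂μ, dotC φ φ = 1 ∧ dotC e0 φ = 0)
    (hbal : BalancedDist μ)
    {S S' : Finset (Fin (t₁ + t₂))} (hS : S ⊆ TT t₁ t₂) (hS' : S' ⊆ TT t₁ t₂)
    (hne : S.card ≠ S'.card) :
    ∫ φ, outerF (setVec t₁ t₂ d e0 φ S) (setVec t₁ t₂ d e0 φ S') ∂μ = 0 := by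
  classical
  set ν : Measure ℝ := (ENNReal.ofReal (2 * Real.pi)⁻¹ •
      volume.restrict (Set.Ioc (0 : ℝ) (2 * Real.pi))) with hν
  haveI : IsProbabilityMeasure ν := nuDist_prob
  set F : (Fin d → ℂ) → ((Fin (t₁ + t₂) → Fin d) × (Fin (t₁ + t₂) → Fin d) → ℂ) :=
    fun φ => outerF (setVec t₁ t₂ d e0 φ S) (setVec t₁ t₂ d e0 φ S') with hF
  set Φ : ℝ × (Fin d → ℂ) → (Fin d → ℂ) :=
    fun p => Complex.exp ((p.1 : ℂ) * Complex.I) • p.2 with hΦdef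
  have hΦ : Continuous Φ :=
    ((Complex.continuous_exp.comp
      ((Complex.continuous_ofReal.comp continuous_fst).mul continuous_const)).smul
      continuous_snd)
  have hFc : Continuous F := continuous_setVec_outer t₁ t₂ d e0 S S'
  set m : ℤ := (S.card : ℤ) - (S'.card : ℤ) with hm
  have hm0 : m ≠ 0 := by
    simp only [hm, sub_ne_zero]
    exact_mod_cast hne
  have hkey : ∀ p : ℝ × (Fin d → ℂ),
      F (Φ p) = ((Complex.exp ((p.1 : ℂ) * Complex.I)) ^ m) • F p.2 := by
    intro p
    set z : ℂ := Complex.exp ((p.1 : ℂ) * Complex.I) with hz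
    have hz0 : z ≠ 0 := Complex.exp_ne_zero _
    have hconj : (starRingEnd ℂ) z = z⁻¹ := by
      rw [hz, ← Complex.exp_conj, ← Complex.exp_neg]
      congr 1
      simp [Complex.conj_ofReal]
    simp only [hF, hΦdef]
    rw [setVec_smul t₁ t₂ d e0 p.2 z hS, setVec_smul t₁ t₂ d e0 p.2 z hS',
      outerF_smul_smul]
    congr 1
    rw [map_pow, hconj, inv_pow, ← zpow_natCast z, ← zpow_natCast z, ← zpow_neg,
      ← zpow_add₀ hz0]
    congr 1
    push_cast
    ring
  have hIntF : Integrable F μ := integrable_outer_setVec t₁ t₂ d e0 μ hsupp S S'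
  have hmap : Measure.map Φ (ν.prod μ) = μ := hbal
  have hIntLift : Integrable (fun p => F (Φ p)) (ν.prod μ) := by
    have h2 : Integrable F (Measure.map Φ (ν.prod μ)) := by rw [hmap]; exact hIntF
    exact (integrable_map_measure hFc.aestronglyMeasurable hΦ.aemeasurable).mp h2
  calc ∫ φ, F φ ∂μ
      = ∫ p, F (Φ p) ∂(ν.prod μ) := by
        conv_lhs => rw [← hmap]
        exact integral_map hΦ.aemeasurable hFc.aestronglyMeasurable
    _ = ∫ p, ((Complex.exp (((p : ℝ × (Fin d → ℂ)).1 : ℂ) * Complex.I)) ^ m) • F p.2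
          ∂(ν.prod μ) := by
        exact integral_congr_ae (Filter.Eventually.of_forall hkey)
    _ = ∫ θ : ℝ, ∫ φ, ((Complex.exp ((θ : ℂ) * Complex.I)) ^ m) • F φ ∂μ ∂ν := by
        apply MeasureTheory.integral_prod
        exact hIntLift.congr (Filter.Eventually.of_forall hkey)
    _ = ∫ θ : ℝ, ((Complex.exp ((θ : ℂ) * Complex.I)) ^ m) • (∫ φ, F φ ∂μ) ∂ν := by
        refine integral_congr_ae (Filter.Eventually.of_forall fun θ => ?_)
        exact integral_smul _ _
    _ = (∫ θ : ℝ, (Complex.exp ((θ : ℂ) * Complex.I)) ^ m ∂ν) • (∫ φ, F φ ∂μ) :=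
        integral_smul_const _ _
    _ = 0 := by
        rw [hν, phase_integral_zero m hm0, zero_smul]



/-- For a balanced distribution `D` over unit vectors orthogonal to `|0⟩`,
`E_{φ←D}[|φ-⟩⟨φ-|^{⊗t₁} ⊗ |φ⟩⟨φ|^{⊗t₂}]
  = E_{φ←D, c←Binomial(t₁,1/2)}[|Rep(t₁,c,φ)⟩⟨Rep(t₁,c,φ)| ⊗ |φ⟩⟨φ|^{⊗t₂}]`. -/
theorem balanced_phiMinus_mixture (t₁ t₂ d : ℕ) (e0 : Fin d → ℂ)
    (h00 : dotC e0 e0 = 1)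
    (μ : Measure (Fin d → ℂ)) [IsProbabilityMeasure μ]
    (hsupp : ∀ᵐ φ ∂μ, dotC φ φ = 1 ∧ dotC e0 φ = 0)
    (hbal : BalancedDist μ) :
    (∫ φ, outerF (bigVec t₁ t₂ d e0 φ) (bigVec t₁ t₂ d e0 φ) ∂μ)
      = ∑ c ∈ range (t₁ + 1),
          ((t₁.choose c : ℝ) / 2 ^ t₁) •
            ∫ φ, outerF (repVecFull t₁ t₂ d e0 φ c)
                (repVecFull t₁ t₂ d e0 φ c) ∂μ := by
  classical
  set G : Finset (Fin (t₁ + t₂)) → Finset (Fin (t₁ + t₂)) →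
      (((Fin (t₁ + t₂) → Fin d) × (Fin (t₁ + t₂) → Fin d)) → ℂ) :=
    fun S S' => ∫ φ, outerF (setVec t₁ t₂ d e0 φ S) (setVec t₁ t₂ d e0 φ S') ∂μ with hG
  have hInt := fun S S' => integrable_outer_setVec t₁ t₂ d e0 μ hsupp S S'
  have hsplit : ∀ (A B : Finset (Finset (Fin (t₁ + t₂)))),
      ∫ φ, ∑ S ∈ A, ∑ S' ∈ B,
          outerF (setVec t₁ t₂ d e0 φ S) (setVec t₁ t₂ d e0 φ S') ∂μ
        = ∑ S ∈ A, ∑ S' ∈ B, G S S' := by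
    intro A B
    rw [integral_finset_sum _ (fun S _ => integrable_finset_sum _ fun S' _ => hInt S S')]
    exact Finset.sum_congr rfl fun S _ => integral_finset_sum _ fun S' _ => hInt S S'
  have hsc2 : (((Real.sqrt 2 : ℂ))⁻¹ ^ t₁) * (starRingEnd ℂ) (((Real.sqrt 2 : ℂ))⁻¹ ^ t₁)
      = ((2 : ℂ) ^ t₁)⁻¹ := by
    rw [map_pow, map_inv₀, Complex.conj_ofReal, ← mul_pow, ← mul_inv, ← Complex.ofReal_mul,
      Real.mul_self_sqrt (by norm_num), ← inv_pow]
    norm_num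
  have hLHS : ∫ φ, outerF (bigVec t₁ t₂ d e0 φ) (bigVec t₁ t₂ d e0 φ) ∂μ
      = ((2 : ℂ) ^ t₁)⁻¹ • ∑ S ∈ (TT t₁ t₂).powerset, ∑ S' ∈ (TT t₁ t₂).powerset, G S S' := by
    have hpt : ∀ φ : Fin d → ℂ, outerF (bigVec t₁ t₂ d e0 φ) (bigVec t₁ t₂ d e0 φ)
        = ((((Real.sqrt 2 : ℂ))⁻¹ ^ t₁) * (starRingEnd ℂ) (((Real.sqrt 2 : ℂ))⁻¹ ^ t₁)) •
            ∑ S ∈ (TT t₁ t₂).powerset, ∑ S' ∈ (TT t₁ t₂).powerset,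
              outerF (setVec t₁ t₂ d e0 φ S) (setVec t₁ t₂ d e0 φ S') := by
      intro φ
      rw [bigVec_eq, outerF_smul_smul, outerF_sum_sum]
    simp only [hpt, hsc2]
    rw [integral_smul, hsplit]
  have hRHS : ∀ c ∈ range (t₁ + 1),
      ((t₁.choose c : ℝ) / 2 ^ t₁) •
          ∫ φ, outerF (repVecFull t₁ t₂ d e0 φ c) (repVecFull t₁ t₂ d e0 φ c) ∂μ
        = ((2 : ℂ) ^ t₁)⁻¹ •
            ∑ S ∈ powersetCard c (TT t₁ t₂), ∑ S' ∈ powersetCard c (TT t₁ t₂), G S S' := by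
    intro c hc
    have hcle : c ≤ t₁ := by
      rw [mem_range] at hc; omega
    have hCpos : (0 : ℝ) < (t₁.choose c : ℝ) := by
      exact_mod_cast Nat.choose_pos hcle
    have hrep : ∀ φ : Fin d → ℂ, repVecFull t₁ t₂ d e0 φ c
        = ((Real.sqrt (t₁.choose c) : ℂ))⁻¹ •
            ∑ S ∈ powersetCard c (TT t₁ t₂), setVec t₁ t₂ d e0 φ S := fun φ => rfl
    have hpt : ∀ φ : Fin d → ℂ,
        outerF (repVecFull t₁ t₂ d e0 φ c) (repVecFull t₁ t₂ d e0 φ c)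
          = ((((Real.sqrt (t₁.choose c) : ℂ))⁻¹) *
              (starRingEnd ℂ) (((Real.sqrt (t₁.choose c) : ℂ))⁻¹)) •
              ∑ S ∈ powersetCard c (TT t₁ t₂), ∑ S' ∈ powersetCard c (TT t₁ t₂),
                outerF (setVec t₁ t₂ d e0 φ S) (setVec t₁ t₂ d e0 φ S') := by
      intro φ
      rw [hrep, outerF_smul_smul, outerF_sum_sum]
    simp only [hpt]
    rw [integral_smul, hsplit, ← Complex.coe_smul, smul_smul]
    congr 1
    rw [map_inv₀, Complex.conj_ofReal, ← mul_inv, ← Complex.ofReal_mul,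
      Real.mul_self_sqrt (le_of_lt hCpos)]
    rw [Complex.ofReal_div]
    push_cast
    field_simp
    exact div_self (Nat.cast_ne_zero.mpr (Nat.choose_pos hcle).ne')
  rw [hLHS, Finset.sum_congr rfl hRHS, ← Finset.smul_sum]
  congr 1
  rw [Finset.sum_powerset, card_TT]
  refine Finset.sum_congr rfl fun c hc => ?_
  refine Finset.sum_congr rfl fun S hS => ?_
  rw [Finset.sum_powerset, card_TT]
  rw [Finset.mem_powersetCard] at hS
  rw [Finset.sum_eq_single c]
  · intro c' _ hne'
    apply Finset.sum_eq_zero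
    intro S' hS'
    rw [Finset.mem_powersetCard] at hS'
    exact cross_zero t₁ t₂ d e0 μ hsupp hbal hS.1 hS'.1
      (by rw [hS.2, hS'.2]; exact fun h => hne' h.symm)
  · intro hcc
    exact absurd (mem_range.mpr (by
      have h1 : S.card ≤ (TT t₁ t₂).card := Finset.card_le_card hS.1
      rw [card_TT] at h1
      omega)) hcc

end
end

section
/- Let A₁,A₂ and B₁,B₂ be register groups of a₁, a₂, b₁, b₂ subsystems of dimension N+1, and T a collision-free subset of [N] with a₁+a₂ ≤ |T| ≤ a₁+a₂+b₁+b₂. Then the vector |𝔷(T,(B₁,B₂))⟩ (the uniform superposition over arrangements of T∪{0,…,0} in registers A₁A₂B₁B₂ with all zeros confined to B₁∪B₂) decomposes as Σ_X √α_{|X|} |𝔷(X,B₁)⟩ ⊗ |𝔷(T∖X,B₂)⟩, where the sum is over X ⊆ T with a₁ ≤ |X| ≤ a₁+b₁ and a₂ ≤ |T|−|X| ≤ a₂+b₂, and α_i = C(b₁, i−a₁)·C(b₂, |T|−i−a₂) / (C(b₁+b₂, |T|−a₁−a₂)·C(|T|, i)). -/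
open Finset

open scoped Classical

noncomputable section

/-- `|𝔷(T,B)⟩`: the normalized uniform superposition over sequences of length
`a + b` over `[N] ∪ {0}` whose nonzero entries enumerate the collision-free
type `T` exactly once each, with the first `a` positions (register group `A`)
required to be nonzero. -/
def zVec (N a b : ℕ) (T : Finset (Fin N)) : (Fin (a + b) → Fin (N + 1)) → ℂ :=
  fun v =>
    if ((∀ i : Fin (a + b), (i : ℕ) < a → v i ≠ 0) ∧
        (∀ i j, v i ≠ 0 → v i = v j → i = j) ∧
        (∀ x : Fin N, x.succ ∈ Set.range v ↔ x ∈ T)) then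
      ((Real.sqrt (Nat.factorial T.card * b.choose (T.card - a)) : ℂ))⁻¹
    else 0

/-- `|𝔷(T,(B₁,B₂))⟩` on the joint registers `(A₁,B₁),(A₂,B₂)`: zeros are
confined to `B₁ ∪ B₂` and the nonzero entries enumerate `T`. -/
def zVec₂ (N a₁ b₁ a₂ b₂ : ℕ) (T : Finset (Fin N)) :
    ((Fin (a₁ + b₁) ⊕ Fin (a₂ + b₂)) → Fin (N + 1)) → ℂ :=
  fun v =>
    if ((∀ i : Fin (a₁ + b₁), (i : ℕ) < a₁ → v (Sum.inl i) ≠ 0) ∧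
        (∀ i : Fin (a₂ + b₂), (i : ℕ) < a₂ → v (Sum.inr i) ≠ 0) ∧
        (∀ i j, v i ≠ 0 → v i = v j → i = j) ∧
        (∀ x : Fin N, x.succ ∈ Set.range v ↔ x ∈ T)) then
      ((Real.sqrt (Nat.factorial T.card *
          (b₁ + b₂).choose (T.card - a₁ - a₂)) : ℂ))⁻¹
    else 0

/-- Tensor product along the direct-sum register decomposition. -/
def tensF {N a₁ b₁ a₂ b₂ : ℕ} (u : (Fin (a₁ + b₁) → Fin (N + 1)) → ℂ)
    (w : (Fin (a₂ + b₂) → Fin (N + 1)) → ℂ) :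
    ((Fin (a₁ + b₁) ⊕ Fin (a₂ + b₂)) → Fin (N + 1)) → ℂ :=
  fun v => u (fun i => v (Sum.inl i)) * w (fun i => v (Sum.inr i))

lemma zCard_bounds {N a b : ℕ} {T : Finset (Fin N)} {u : Fin (a + b) → Fin (N + 1)}
    (h1 : ∀ i : Fin (a + b), (i : ℕ) < a → u i ≠ 0)
    (h2 : ∀ i j, u i ≠ 0 → u i = u j → i = j)
    (h3 : ∀ x : Fin N, x.succ ∈ Set.range u ↔ x ∈ T) :
    a ≤ T.card ∧ T.card ≤ a + b := by
  constructor
  · have hf : ∀ i : Fin a, ∃ x : Fin N, x ∈ T ∧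
        u ⟨i, lt_of_lt_of_le i.2 (Nat.le_add_right a b)⟩ = x.succ := by
      intro i
      have hne : u ⟨i, lt_of_lt_of_le i.2 (Nat.le_add_right a b)⟩ ≠ 0 := h1 _ i.2
      obtain ⟨x, hx⟩ := Fin.exists_succ_eq_of_ne_zero hne
      exact ⟨x, (h3 x).mp ⟨_, hx.symm⟩, hx.symm⟩
    choose f hfT hfu using hf
    have hinj : Function.Injective (fun i : Fin a => (⟨f i, hfT i⟩ : {x // x ∈ T})) := by
      intro i j hij
      simp only [Subtype.mk.injEq] at hij
      have h0 : u ⟨i, lt_of_lt_of_le i.2 (Nat.le_add_right a b)⟩ ≠ 0 := h1 _ i.2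
      have : (⟨(i : ℕ), lt_of_lt_of_le i.2 (Nat.le_add_right a b)⟩ : Fin (a+b)) =
          ⟨(j : ℕ), lt_of_lt_of_le j.2 (Nat.le_add_right a b)⟩ := by
        apply h2 _ _ h0
        rw [hfu i, hfu j, hij]
      have h' := congrArg Fin.val this
      exact Fin.ext h'
    calc a = Fintype.card (Fin a) := (Fintype.card_fin a).symm
    _ ≤ Fintype.card {x // x ∈ T} := Fintype.card_le_of_injective _ hinj
    _ = T.card := Fintype.card_coe T
  · have hf : ∀ x : {x // x ∈ T}, ∃ i : Fin (a + b), u i = (x : Fin N).succ := by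
      intro x; exact (h3 x).mpr x.2
    choose f hf using hf
    have hinj : Function.Injective f := by
      intro x y hxy
      have : (x : Fin N).succ = (y : Fin N).succ := by rw [← hf x, ← hf y, hxy]
      exact Subtype.ext (Fin.succ_injective _ this)
    calc T.card = Fintype.card {x // x ∈ T} := (Fintype.card_coe T).symm
    _ ≤ Fintype.card (Fin (a + b)) := Fintype.card_le_of_injective _ hinj
    _ = a + b := Fintype.card_fin _

lemma amp_eq (t k a₁ a₂ b₁ b₂ : ℕ) (hk : k ≤ t) (hkb : k - a₁ ≤ b₁)
    (hmb : t - k - a₂ ≤ b₂) (ht : t - a₁ - a₂ ≤ b₁ + b₂) :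
    Real.sqrt (((b₁.choose (k - a₁) : ℝ) * (b₂.choose (t - k - a₂) : ℝ)) /
        (((b₁ + b₂).choose (t - a₁ - a₂) : ℝ) * (t.choose k : ℝ))) *
      ((Real.sqrt (k.factorial * b₁.choose (k - a₁)))⁻¹ *
       (Real.sqrt ((t - k).factorial * b₂.choose (t - k - a₂)))⁻¹)
    = (Real.sqrt (t.factorial * (b₁ + b₂).choose (t - a₁ - a₂)))⁻¹ := by
  have hA : (0:ℝ) < b₁.choose (k - a₁) := by exact_mod_cast Nat.choose_pos hkb
  have hB : (0:ℝ) < b₂.choose (t - k - a₂) := by exact_mod_cast Nat.choose_pos hmb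
  have hC : (0:ℝ) < (b₁ + b₂).choose (t - a₁ - a₂) := by exact_mod_cast Nat.choose_pos ht
  have hD : (0:ℝ) < t.choose k := by exact_mod_cast Nat.choose_pos hk
  have hK : (0:ℝ) < k.factorial := by exact_mod_cast k.factorial_pos
  have hM : (0:ℝ) < (t - k).factorial := by exact_mod_cast (t - k).factorial_pos
  have hid : (t.choose k : ℝ) * k.factorial * (t - k).factorial = t.factorial := by
    exact_mod_cast Nat.choose_mul_factorial_mul_factorial hk
  rw [← Real.sqrt_inv, ← Real.sqrt_inv, ← Real.sqrt_mul (by positivity),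
    ← Real.sqrt_mul (by positivity), ← Real.sqrt_inv]
  congr 1
  field_simp
  linear_combination (-1 : ℝ) * hid

lemma glue {N a₁ b₁ a₂ b₂ : ℕ} {T X : Finset (Fin N)} (hXT : X ⊆ T)
    (v : (Fin (a₁ + b₁) ⊕ Fin (a₂ + b₂)) → Fin (N + 1))
    (hu2 : ∀ i j, v (Sum.inl i) ≠ 0 → v (Sum.inl i) = v (Sum.inl j) → i = j)
    (hu3 : ∀ x : Fin N, x.succ ∈ Set.range (fun i => v (Sum.inl i)) ↔ x ∈ X)
    (hw2 : ∀ i j, v (Sum.inr i) ≠ 0 → v (Sum.inr i) = v (Sum.inr j) → i = j)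
    (hw3 : ∀ x : Fin N, x.succ ∈ Set.range (fun i => v (Sum.inr i)) ↔ x ∈ T \ X) :
    (∀ i j, v i ≠ 0 → v i = v j → i = j) ∧
    (∀ x : Fin N, x.succ ∈ Set.range v ↔ x ∈ T) := by
  have key : ∀ (i : Fin (a₁ + b₁)) (j : Fin (a₂ + b₂)),
      v (Sum.inl i) ≠ 0 → v (Sum.inl i) ≠ v (Sum.inr j) := by
    intro i j hne heq
    obtain ⟨x, hx⟩ := Fin.exists_succ_eq_of_ne_zero hne
    have hxX : x ∈ X := (hu3 x).mp ⟨i, hx.symm⟩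
    have hxY : x ∈ T \ X := (hw3 x).mp ⟨j, (hx.trans heq).symm⟩
    exact (Finset.mem_sdiff.mp hxY).2 hxX
  constructor
  · rintro (i | i) (j | j) hne heq
    · exact congrArg Sum.inl (hu2 i j hne heq)
    · exact absurd heq (key i j hne)
    · exact absurd heq.symm (key j i (heq ▸ hne))
    · exact congrArg Sum.inr (hw2 i j hne heq)
  · intro x
    constructor
    · rintro ⟨(i | j), hi⟩
      · exact hXT ((hu3 x).mp ⟨i, hi⟩)
      · exact (Finset.mem_sdiff.mp ((hw3 x).mp ⟨j, hi⟩)).1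
    · intro hxT
      by_cases hxX : x ∈ X
      · obtain ⟨i, hi⟩ := (hu3 x).mpr hxX
        exact ⟨Sum.inl i, hi⟩
      · obtain ⟨j, hj⟩ := (hw3 x).mpr (Finset.mem_sdiff.mpr ⟨hxT, hxX⟩)
        exact ⟨Sum.inr j, hj⟩

/-- Decomposition of `|𝔷(T,(B₁,B₂))⟩` into a superposition of
`|𝔷(X,B₁)⟩ ⊗ |𝔷(T∖X,B₂)⟩` with hypergeometric amplitudes `√α_{|X|}`. -/
theorem zVec_split (N a₁ a₂ b₁ b₂ : ℕ) (T : Finset (Fin N))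
    (h1 : a₁ + a₂ ≤ T.card) (h2 : T.card ≤ a₁ + a₂ + b₁ + b₂) :
    zVec₂ N a₁ b₁ a₂ b₂ T
      = ∑ X ∈ T.powerset.filter (fun X =>
            a₁ ≤ X.card ∧ X.card ≤ a₁ + b₁ ∧
            a₂ ≤ T.card - X.card ∧ T.card - X.card ≤ a₂ + b₂),
          (Real.sqrt
              (((b₁.choose (X.card - a₁) : ℝ) *
                  (b₂.choose (T.card - X.card - a₂) : ℝ)) /
                (((b₁ + b₂).choose (T.card - a₁ - a₂) : ℝ) *
                  (T.card.choose X.card : ℝ))) : ℂ) •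
            tensF (zVec N a₁ b₁ X) (zVec N a₂ b₂ (T \ X)) := by
  classical
  funext v
  simp only [zVec₂, Finset.sum_apply, Pi.smul_apply, tensF, smul_eq_mul]
  set u : Fin (a₁ + b₁) → Fin (N + 1) := fun i => v (Sum.inl i) with hu
  set w : Fin (a₂ + b₂) → Fin (N + 1) := fun i => v (Sum.inr i) with hw
  by_cases hP : ((∀ i : Fin (a₁ + b₁), (i : ℕ) < a₁ → v (Sum.inl i) ≠ 0) ∧
        (∀ i : Fin (a₂ + b₂), (i : ℕ) < a₂ → v (Sum.inr i) ≠ 0) ∧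
        (∀ i j, v i ≠ 0 → v i = v j → i = j) ∧
        (∀ x : Fin N, x.succ ∈ Set.range v ↔ x ∈ T))
  case neg =>
    rw [if_neg hP]
    symm
    apply Finset.sum_eq_zero
    intro X hX
    have hXT : X ⊆ T := Finset.mem_powerset.mp (Finset.mem_filter.mp hX).1
    by_cases hcu : ((∀ i : Fin (a₁ + b₁), (i : ℕ) < a₁ → u i ≠ 0) ∧
        (∀ i j, u i ≠ 0 → u i = u j → i = j) ∧
        (∀ x : Fin N, x.succ ∈ Set.range u ↔ x ∈ X))
    · by_cases hcw : ((∀ i : Fin (a₂ + b₂), (i : ℕ) < a₂ → w i ≠ 0) ∧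
          (∀ i j, w i ≠ 0 → w i = w j → i = j) ∧
          (∀ x : Fin N, x.succ ∈ Set.range w ↔ x ∈ T \ X))
      · exfalso
        obtain ⟨hu1, hu2, hu3⟩ := hcu
        obtain ⟨hw1, hw2, hw3⟩ := hcw
        obtain ⟨g1, g2⟩ := glue hXT v hu2 hu3 hw2 hw3
        exact hP ⟨hu1, hw1, g1, g2⟩
      · simp only [zVec, if_neg hcw, mul_zero]
    · simp only [zVec, if_neg hcu, zero_mul, mul_zero]
  case pos =>
    obtain ⟨hA, hB, hinj, hrng⟩ := hP
    rw [if_pos ⟨hA, hB, hinj, hrng⟩]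
    set X₀ : Finset (Fin N) := T.filter (fun x => x.succ ∈ Set.range u) with hX₀
    have hX₀T : X₀ ⊆ T := Finset.filter_subset _ _
    have hu3 : ∀ x : Fin N, x.succ ∈ Set.range u ↔ x ∈ X₀ := by
      intro x
      constructor
      · intro ⟨i, hi⟩
        exact Finset.mem_filter.mpr ⟨(hrng x).mp ⟨Sum.inl i, hi⟩, ⟨i, hi⟩⟩
      · intro h; exact (Finset.mem_filter.mp h).2
    have hu2 : ∀ i j, u i ≠ 0 → u i = u j → i = j := by
      intro i j hne heq
      exact Sum.inl.inj (hinj _ _ hne heq)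
    have hw2 : ∀ i j, w i ≠ 0 → w i = w j → i = j := by
      intro i j hne heq
      exact Sum.inr.inj (hinj _ _ hne heq)
    have hw3 : ∀ x : Fin N, x.succ ∈ Set.range w ↔ x ∈ T \ X₀ := by
      intro x
      constructor
      · intro ⟨j, hj⟩
        refine Finset.mem_sdiff.mpr ⟨(hrng x).mp ⟨Sum.inr j, hj⟩, ?_⟩
        intro hxX
        obtain ⟨i, hi⟩ := (hu3 x).mpr hxX
        have hi' : v (Sum.inl i) = x.succ := hi
        have hj' : v (Sum.inr j) = x.succ := hj
        have : (Sum.inl i : Fin (a₁ + b₁) ⊕ Fin (a₂ + b₂)) = Sum.inr j := by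
          apply hinj
          · rw [hi']; exact Fin.succ_ne_zero x
          · rw [hi', hj']
        exact Sum.inl_ne_inr this
      · intro hx
        obtain ⟨hxT, hxX⟩ := Finset.mem_sdiff.mp hx
        obtain ⟨i | j, hi⟩ := (hrng x).mpr hxT
        · exact absurd ((hu3 x).mp ⟨i, hi⟩) hxX
        · exact ⟨j, hi⟩
    obtain ⟨hb1l, hb1r⟩ := zCard_bounds hA hu2 hu3
    obtain ⟨hb2l, hb2r⟩ := zCard_bounds hB hw2 hw3
    have hcard : (T \ X₀).card = T.card - X₀.card := Finset.card_sdiff_of_subset hX₀T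
    have hkT : X₀.card ≤ T.card := Finset.card_le_card hX₀T
    have hmem : X₀ ∈ T.powerset.filter (fun X =>
        a₁ ≤ X.card ∧ X.card ≤ a₁ + b₁ ∧
        a₂ ≤ T.card - X.card ∧ T.card - X.card ≤ a₂ + b₂) := by
      refine Finset.mem_filter.mpr ⟨Finset.mem_powerset.mpr hX₀T, hb1l, hb1r, ?_, ?_⟩
      · omega
      · omega
    rw [Finset.sum_eq_single_of_mem X₀ hmem]
    · have hcu : ((∀ i : Fin (a₁ + b₁), (i : ℕ) < a₁ → u i ≠ 0) ∧
          (∀ i j, u i ≠ 0 → u i = u j → i = j) ∧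
          (∀ x : Fin N, x.succ ∈ Set.range u ↔ x ∈ X₀)) := ⟨hA, hu2, hu3⟩
      have hcw : ((∀ i : Fin (a₂ + b₂), (i : ℕ) < a₂ → w i ≠ 0) ∧
          (∀ i j, w i ≠ 0 → w i = w j → i = j) ∧
          (∀ x : Fin N, x.succ ∈ Set.range w ↔ x ∈ T \ X₀)) := ⟨hB, hw2, hw3⟩
      simp only [zVec, if_pos hcu, if_pos hcw, hcard]
      rw [← Complex.ofReal_inv, ← Complex.ofReal_inv, ← Complex.ofReal_inv,
        ← Complex.ofReal_mul, ← Complex.ofReal_mul]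
      norm_cast
      push_cast
      exact (amp_eq T.card X₀.card a₁ a₂ b₁ b₂ hkT (by omega) (by omega) (by omega)).symm
    · intro X hX hne
      by_cases hcu : ((∀ i : Fin (a₁ + b₁), (i : ℕ) < a₁ → u i ≠ 0) ∧
          (∀ i j, u i ≠ 0 → u i = u j → i = j) ∧
          (∀ x : Fin N, x.succ ∈ Set.range u ↔ x ∈ X))
      · exfalso
        apply hne
        ext x
        rw [← (hcu.2.2 x), hu3 x]
      · simp only [zVec, if_neg hcu, zero_mul, mul_zero]

end
end

section
/- Let A₁,A₂,B₁,B₂ contain a₁,a₂,b₁,b₂ systems of dimension N+1, T ⊆ [N] collision-free, and b₁^f, b₂^f nonnegative integers with |T| = a₁+a₂+b₁^f+b₂^f. Then |𝔷²(T,B₁,B₂)^{b₁^f,b₂^f}⟩ = C(|T|, a₁+b₁^f)^{−1/2} Σ_{X⊆T, |X|=a₁+b₁^f} |𝔷(X,B₁)⟩ ⊗ |𝔷(T∖X,B₂)⟩. -/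
open Finset

open scoped Classical

noncomputable section

lemma aux_card_range {N m : ℕ} (w : Fin m → Fin (N+1))
    (hinj : ∀ i j, w i ≠ 0 → w i = w j → i = j)
    (X : Finset (Fin N)) (hX : ∀ x : Fin N, x.succ ∈ Set.range w ↔ x ∈ X) :
    (univ.filter (fun i => w i ≠ 0)).card = X.card := by
  apply Finset.card_bij (fun j hj => (w j).pred (by simpa using hj))
  · intro j hj
    have h : w j ≠ 0 := by simpa using hj
    exact (hX _).1 ⟨j, (Fin.succ_pred _ h).symm⟩
  · intro i₁ h₁ i₂ h₂ heq
    have h1 : w i₁ ≠ 0 := by simpa using h₁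
    have : w i₁ = w i₂ := by
      rw [← Fin.succ_pred (w i₁) h1, ← Fin.succ_pred (w i₂) (by simpa using h₂), heq]
    exact hinj _ _ h1 this
  · intro x hx
    obtain ⟨j, hj⟩ := (hX x).2 hx
    refine ⟨j, by simp [hj, Fin.succ_ne_zero], ?_⟩
    simp [hj, Fin.pred_succ]

lemma aux_card_lt {a b : ℕ} :
    ((univ : Finset (Fin (a+b))).filter (fun i : Fin (a+b) => (i:ℕ) < a)).card = a := by
  have h : ((univ : Finset (Fin (a+b))).filter (fun i : Fin (a+b) => (i:ℕ) < a))
      = Finset.image (Fin.castAdd b : Fin a → Fin (a+b)) univ := by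
    ext i
    simp only [mem_filter, mem_univ, true_and, mem_image]
    constructor
    · intro h
      exact ⟨⟨i, h⟩, by simp [Fin.ext_iff]⟩
    · rintro ⟨j, rfl⟩
      exact j.isLt
  rw [h, Finset.card_image_of_injective _ (Fin.castAdd_injective _ _)]
  simp

lemma aux_card_split {N a b : ℕ} (w : Fin (a+b) → Fin (N+1))
    (hA : ∀ i : Fin (a+b), (i:ℕ) < a → w i ≠ 0) :
    (univ.filter (fun i => w i ≠ 0)).card
      = a + ((univ : Finset (Fin (a+b))).filter
          (fun i : Fin (a+b) => a ≤ (i:ℕ) ∧ w i ≠ 0)).card := by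
  have hsplit : univ.filter (fun i => w i ≠ 0)
      = (univ : Finset (Fin (a+b))).filter (fun i : Fin (a+b) => (i:ℕ) < a)
        ∪ (univ : Finset (Fin (a+b))).filter (fun i : Fin (a+b) => a ≤ (i:ℕ) ∧ w i ≠ 0) := by
    ext i
    simp only [mem_filter, mem_univ, true_and, mem_union]
    constructor
    · intro h
      rcases lt_or_ge (i:ℕ) a with h' | h'
      · exact Or.inl h'
      · exact Or.inr ⟨h', h⟩
    · rintro (h | ⟨_, h⟩)
      · exact hA i h
      · exact h
  have hdisj : Disjoint
      ((univ : Finset (Fin (a+b))).filter (fun i : Fin (a+b) => (i:ℕ) < a))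
      ((univ : Finset (Fin (a+b))).filter (fun i : Fin (a+b) => a ≤ (i:ℕ) ∧ w i ≠ 0)) := by
    rw [Finset.disjoint_left]
    intro i hi hj
    simp only [mem_filter, mem_univ, true_and] at hi hj
    omega
  rw [hsplit, Finset.card_union_of_disjoint hdisj, aux_card_lt]

/-- existence of a predecessor for a nonzero element of `Fin (N+1)` -/
lemma aux_exists_succ {N : ℕ} {y : Fin (N+1)} (hy : y ≠ 0) : ∃ x : Fin N, x.succ = y :=
  ⟨y.pred hy, Fin.succ_pred _ hy⟩


/-- `|𝔷²(T,B₁,B₂)^{b₁^f,b₂^f}⟩`: normalized uniform superposition over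
sequences of type `T` (padded with zeros), all `A₁, A₂` positions nonzero,
exactly `b₁f` nonzero entries among `B₁` and exactly `b₂f` among `B₂`. -/
def zVecCount (N a₁ b₁ a₂ b₂ b₁f b₂f : ℕ) (T : Finset (Fin N)) :
    ((Fin (a₁ + b₁) ⊕ Fin (a₂ + b₂)) → Fin (N + 1)) → ℂ :=
  fun v =>
    if ((∀ i : Fin (a₁ + b₁), (i : ℕ) < a₁ → v (Sum.inl i) ≠ 0) ∧
        (∀ i : Fin (a₂ + b₂), (i : ℕ) < a₂ → v (Sum.inr i) ≠ 0) ∧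
        (∀ i j, v i ≠ 0 → v i = v j → i = j) ∧
        (∀ x : Fin N, x.succ ∈ Set.range v ↔ x ∈ T) ∧
        ((univ : Finset (Fin (a₁ + b₁))).filter
            (fun i : Fin (a₁ + b₁) => a₁ ≤ (i : ℕ) ∧ v (Sum.inl i) ≠ 0)).card = b₁f ∧
        ((univ : Finset (Fin (a₂ + b₂))).filter
            (fun i : Fin (a₂ + b₂) => a₂ ≤ (i : ℕ) ∧ v (Sum.inr i) ≠ 0)).card = b₂f) then
      ((Real.sqrt (Nat.factorial T.card * b₁.choose b₁f * b₂.choose b₂f) : ℂ))⁻¹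
    else 0

/-- `|𝔷²(T,B₁,B₂)^{b₁^f,b₂^f}⟩
  = C(|T|, a₁+b₁^f)^{-1/2} Σ_{X⊆T, |X|=a₁+b₁^f} |𝔷(X,B₁)⟩ ⊗ |𝔷(T∖X,B₂)⟩`. -/
theorem zVecCount_split (N a₁ a₂ b₁ b₂ b₁f b₂f : ℕ) (T : Finset (Fin N))
    (hT : T.card = a₁ + a₂ + b₁f + b₂f) :
    zVecCount N a₁ b₁ a₂ b₂ b₁f b₂f T
      = ((Real.sqrt (T.card.choose (a₁ + b₁f)) : ℂ))⁻¹ •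
          ∑ X ∈ T.powerset.filter (fun X => X.card = a₁ + b₁f),
            tensF (zVec N a₁ b₁ X) (zVec N a₂ b₂ (T \ X)) := by
  funext v
  simp only [Pi.smul_apply, Finset.sum_apply, tensF, smul_eq_mul, zVecCount]
  set wl : Fin (a₁ + b₁) → Fin (N+1) := fun i => v (Sum.inl i) with hwl
  set wr : Fin (a₂ + b₂) → Fin (N+1) := fun i => v (Sum.inr i) with hwr
  by_cases hP : ((∀ i : Fin (a₁ + b₁), (i : ℕ) < a₁ → v (Sum.inl i) ≠ 0) ∧
        (∀ i : Fin (a₂ + b₂), (i : ℕ) < a₂ → v (Sum.inr i) ≠ 0) ∧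
        (∀ i j, v i ≠ 0 → v i = v j → i = j) ∧
        (∀ x : Fin N, x.succ ∈ Set.range v ↔ x ∈ T) ∧
        ((univ : Finset (Fin (a₁ + b₁))).filter
            (fun i : Fin (a₁ + b₁) => a₁ ≤ (i : ℕ) ∧ v (Sum.inl i) ≠ 0)).card = b₁f ∧
        ((univ : Finset (Fin (a₂ + b₂))).filter
            (fun i : Fin (a₂ + b₂) => a₂ ≤ (i : ℕ) ∧ v (Sum.inr i) ≠ 0)).card = b₂f)
  · -- the vector satisfies the global condition
    obtain ⟨h1, h2, hinj, hrange, hc1, hc2⟩ := hP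
    rw [if_pos ⟨h1, h2, hinj, hrange, hc1, hc2⟩]
    set X₀ : Finset (Fin N) := T.filter (fun x => x.succ ∈ Set.range wl) with hX₀
    have hinjl : ∀ i j, wl i ≠ 0 → wl i = wl j → i = j := by
      intro i j hi hij
      exact Sum.inl_injective (hinj _ _ hi hij)
    have hinjr : ∀ i j, wr i ≠ 0 → wr i = wr j → i = j := by
      intro i j hi hij
      exact Sum.inr_injective (hinj _ _ hi hij)
    have hXl : ∀ x : Fin N, x.succ ∈ Set.range wl ↔ x ∈ X₀ := by
      intro x
      constructor
      · intro h
        obtain ⟨i, hi⟩ := h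
        exact mem_filter.2 ⟨(hrange x).1 ⟨Sum.inl i, hi⟩, ⟨i, hi⟩⟩
      · intro h
        exact (mem_filter.1 h).2
    have hsub : X₀ ⊆ T := filter_subset _ _
    have hXr : ∀ x : Fin N, x.succ ∈ Set.range wr ↔ x ∈ T \ X₀ := by
      intro x
      constructor
      · rintro ⟨i, hi⟩
        refine mem_sdiff.2 ⟨(hrange x).1 ⟨Sum.inr i, hi⟩, ?_⟩
        intro hx
        obtain ⟨j, hj⟩ := (hXl x).2 hx
        have : Sum.inl j = (Sum.inr i : Fin (a₁+b₁) ⊕ Fin (a₂+b₂)) :=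
          hinj _ _ (show wl j ≠ 0 by rw [hj]; exact Fin.succ_ne_zero x)
            (show wl j = wr i by rw [hj, hi])
        simp at this
      · intro hx
        obtain ⟨hxT, hxX⟩ := mem_sdiff.1 hx
        obtain ⟨k, hk⟩ := (hrange x).2 hxT
        rcases k with i | i
        · exact absurd ((hXl x).1 ⟨i, hk⟩) hxX
        · exact ⟨i, hk⟩
    have cardl : X₀.card = a₁ + b₁f := by
      rw [← aux_card_range wl hinjl X₀ hXl, aux_card_split wl h1, hc1]
    have cardr : (T \ X₀).card = a₂ + b₂f := by
      rw [← aux_card_range wr hinjr (T \ X₀) hXr, aux_card_split wr h2, hc2]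
    have hmem : X₀ ∈ T.powerset.filter (fun X => X.card = a₁ + b₁f) :=
      mem_filter.2 ⟨mem_powerset.2 hsub, cardl⟩
    have hzero : ∀ X ∈ T.powerset.filter (fun X => X.card = a₁ + b₁f), X ≠ X₀ →
        zVec N a₁ b₁ X wl * zVec N a₂ b₂ (T \ X) wr = 0 := by
      intro X hX hne
      rw [zVec]
      rw [if_neg, zero_mul]
      rintro ⟨-, -, hr⟩
      exact hne (Finset.ext fun x => by rw [← hr x, hXl x])
    rw [Finset.sum_eq_single_of_mem X₀ hmem hzero]
    rw [zVec, zVec, if_pos ⟨h1, hinjl, hXl⟩, if_pos ⟨h2, hinjr, hXr⟩]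
    rw [cardl, cardr]
    have e1 : a₁ + b₁f - a₁ = b₁f := by omega
    have e2 : a₂ + b₂f - a₂ = b₂f := by omega
    rw [e1, e2, ← mul_inv, ← mul_inv]
    congr 1
    rw [← Complex.ofReal_mul, ← Complex.ofReal_mul]
    congr 1
    rw [← Real.sqrt_mul (by positivity), ← Real.sqrt_mul (by positivity)]
    congr 1
    have hkn : a₁ + b₁f ≤ T.card := by omega
    have key : T.card.choose (a₁ + b₁f) * Nat.factorial (a₁ + b₁f)
        * Nat.factorial (T.card - (a₁ + b₁f))
        = Nat.factorial T.card := Nat.choose_mul_factorial_mul_factorial hkn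
    have hnk : T.card - (a₁ + b₁f) = a₂ + b₂f := by omega
    rw [hnk] at key
    rw [← key]
    push_cast
    ring
  · -- the vector does not satisfy the global condition
    rw [if_neg hP]
    symm
    rw [mul_eq_zero]
    right
    apply Finset.sum_eq_zero
    intro X hX
    obtain ⟨hXsub, hXcard⟩ := mem_filter.1 hX
    rw [mem_powerset] at hXsub
    by_cases cl : ((∀ i : Fin (a₁ + b₁), (i : ℕ) < a₁ → wl i ≠ 0) ∧
        (∀ i j, wl i ≠ 0 → wl i = wl j → i = j) ∧
        (∀ x : Fin N, x.succ ∈ Set.range wl ↔ x ∈ X))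
    · by_cases cr : ((∀ i : Fin (a₂ + b₂), (i : ℕ) < a₂ → wr i ≠ 0) ∧
          (∀ i j, wr i ≠ 0 → wr i = wr j → i = j) ∧
          (∀ x : Fin N, x.succ ∈ Set.range wr ↔ x ∈ T \ X))
      · -- both conditions hold ⇒ global condition holds ⇒ contradiction
        exfalso
        obtain ⟨hl1, hl2, hl3⟩ := cl
        obtain ⟨hr1, hr2, hr3⟩ := cr
        apply hP
        refine ⟨hl1, hr1, ?_, ?_, ?_, ?_⟩
        · rintro (i | i) (j | j) hi hij
          · exact congrArg Sum.inl (hl2 i j hi hij)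
          · exfalso
            obtain ⟨x, hx⟩ := aux_exists_succ hi
            have hxX : x ∈ X := (hl3 x).1 ⟨i, hx.symm⟩
            have hxX' : x ∈ T \ X := (hr3 x).1 ⟨j, (hx.trans hij).symm⟩
            exact (mem_sdiff.1 hxX').2 hxX
          · exfalso
            obtain ⟨x, hx⟩ := aux_exists_succ hi
            have hxX : x ∈ T \ X := (hr3 x).1 ⟨i, hx.symm⟩
            have hxX' : x ∈ X := (hl3 x).1 ⟨j, (hx.trans hij).symm⟩
            exact (mem_sdiff.1 hxX).2 hxX'
          · exact congrArg Sum.inr (hr2 i j hi hij)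
        · intro x
          constructor
          · rintro ⟨(i | i), hi⟩
            · exact hXsub ((hl3 x).1 ⟨i, hi⟩)
            · exact (mem_sdiff.1 ((hr3 x).1 ⟨i, hi⟩)).1
          · intro hx
            by_cases hxX : x ∈ X
            · obtain ⟨i, hi⟩ := (hl3 x).2 hxX
              exact ⟨Sum.inl i, hi⟩
            · obtain ⟨i, hi⟩ := (hr3 x).2 (mem_sdiff.2 ⟨hx, hxX⟩)
              exact ⟨Sum.inr i, hi⟩
        · have h := aux_card_range wl hl2 X hl3
          rw [aux_card_split wl hl1, hXcard] at h
          show ((univ : Finset (Fin (a₁ + b₁))).filter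
            (fun i : Fin (a₁ + b₁) => a₁ ≤ (i : ℕ) ∧ wl i ≠ 0)).card = b₁f
          omega
        · have := aux_card_range wr hr2 (T \ X) hr3
          have hc : (T \ X).card = a₂ + b₂f := by
            rw [card_sdiff_of_subset hXsub]
            omega
          rw [aux_card_split wr hr1, hc] at this
          show ((univ : Finset (Fin (a₂ + b₂))).filter
            (fun i : Fin (a₂ + b₂) => a₂ ≤ (i : ℕ) ∧ wr i ≠ 0)).card = b₂f
          omega
      · rw [zVec, zVec, if_neg cr, mul_zero]
    · rw [zVec, if_neg cl, zero_mul]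


end
end
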